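/- arXiv:2105.02266 — 6 statements merged into one kernel-verified Lean document; each statement's English description precedes it below -/
import Mathlib

section
/- Let V, V' be matrices with ‖V‖ ≤ C_g and ‖V'‖ ≤ C_g, let H, H' be symmetric matrices with H ⪰ λI, H' ⪰ λI (λ > 0), and let v, v' be vectors with ‖v‖ ≤ C_f, ‖v'‖ ≤ C_f. Then ‖V H⁻¹ v - V' (H')⁻¹ v'‖² ≤ 3(C_f²/λ²)‖V - V'‖² + 3(C_f² C_g²/λ⁴)‖H - H'‖² + 3(C_g²/λ²)‖v - v'‖². -/
set_option maxHeartbeats 1000000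
set_option synthInstance.maxHeartbeats 400000

/-- Auxiliary: a coercive operator on a Euclidean space is invertible (via `Ring.inverse`)
with inverse of norm at most `1/lam`. -/
theorem aux_inv {n : ℕ} (lam : ℝ) (hlam : 0 < lam)
    (H : EuclideanSpace ℝ (Fin n) →L[ℝ] EuclideanSpace ℝ (Fin n))
    (hHc : ∀ x, lam * ‖x‖ ^ 2 ≤ (inner ℝ (H x) x : ℝ)) :
    (∀ y, H (Ring.inverse H y) = y) ∧ ‖Ring.inverse H‖ ≤ 1 / lam := by
  have hlow : ∀ x, lam * ‖x‖ ≤ ‖H x‖ := by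
    intro x
    rcases eq_or_lt_of_le (norm_nonneg x) with h0 | h0
    · simp [← h0]
    · have h1 := hHc x
      have h2 : (inner ℝ (H x) x : ℝ) ≤ ‖H x‖ * ‖x‖ := real_inner_le_norm _ _
      have : lam * ‖x‖ * ‖x‖ ≤ ‖H x‖ * ‖x‖ := by nlinarith
      exact le_of_mul_le_mul_right this h0
  have hinj : Function.Injective H := by
    intro x y hxy
    have hx : H (x - y) = 0 := by simp [map_sub, hxy]
    have := hlow (x - y)
    rw [hx, norm_zero] at this
    have : ‖x - y‖ ≤ 0 := by nlinarith
    exact sub_eq_zero.mp (norm_le_zero_iff.mp this)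
  have hsurj : Function.Surjective H :=
    LinearMap.injective_iff_surjective.mp hinj
  let e : EuclideanSpace ℝ (Fin n) ≃L[ℝ] EuclideanSpace ℝ (Fin n) :=
    ContinuousLinearEquiv.ofBijective H (LinearMap.ker_eq_bot.mpr hinj)
      (LinearMap.range_eq_top.mpr hsurj)
  have hu : Ring.inverse H = (e.symm : _ →L[ℝ] _) := by
    have : ((ContinuousLinearEquiv.unitsEquiv ℝ _).symm e : _ →L[ℝ] _) = H := rfl
    rw [← this, Ring.inverse_unit]
    rfl
  constructor
  · intro y
    rw [hu]
    exact e.apply_symm_apply y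
  · rw [hu]
    apply ContinuousLinearMap.opNorm_le_bound _ (by positivity)
    intro y
    have h1 := hlow (e.symm y)
    have h2 : H (e.symm y) = y := e.apply_symm_apply y
    rw [h2] at h1
    rw [div_mul_eq_mul_div, le_div_iff₀ hlam]
    simpa [mul_comm] using h1

/-- Three-term bound for differences of products `V H⁻¹ v` with bounded factors and `H ⪰ λI`. -/
theorem stmt5 {d d' : ℕ} (lam Cf Cg : ℝ) (hlam : 0 < lam)
    (V V' : EuclideanSpace ℝ (Fin d') →L[ℝ] EuclideanSpace ℝ (Fin d))
    (H H' : EuclideanSpace ℝ (Fin d') →L[ℝ] EuclideanSpace ℝ (Fin d'))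
    (v v' : EuclideanSpace ℝ (Fin d'))
    (hV : ‖V‖ ≤ Cg) (hV' : ‖V'‖ ≤ Cg)
    (hHsa : IsSelfAdjoint H) (hH'sa : IsSelfAdjoint H')
    (hHc : ∀ x, lam * ‖x‖ ^ 2 ≤ (inner ℝ (H x) x : ℝ))
    (hH'c : ∀ x, lam * ‖x‖ ^ 2 ≤ (inner ℝ (H' x) x : ℝ))
    (hv : ‖v‖ ≤ Cf) (hv' : ‖v'‖ ≤ Cf) :
    ‖V (Ring.inverse H v) - V' (Ring.inverse H' v')‖ ^ 2
      ≤ 3 * (Cf ^ 2 / lam ^ 2) * ‖V - V'‖ ^ 2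
        + 3 * (Cf ^ 2 * Cg ^ 2 / lam ^ 4) * ‖H - H'‖ ^ 2
        + 3 * (Cg ^ 2 / lam ^ 2) * ‖v - v'‖ ^ 2 := by
  obtain ⟨hHinv, hHn⟩ := aux_inv lam hlam H hHc
  obtain ⟨hH'inv, hH'n⟩ := aux_inv lam hlam H' hH'c
  set Hi := Ring.inverse H with hHi
  set Hi' := Ring.inverse H' with hHi'
  have hCf : 0 ≤ Cf := le_trans (norm_nonneg v) hv
  have hCg : 0 ≤ Cg := le_trans (norm_nonneg V) hV
  -- telescoping identity
  have hid : V (Hi v) - V' (Hi' v')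
      = (V - V') (Hi v) + V' (Hi ((H' - H) (Hi' v))) + V' (Hi' (v - v')) := by
    have h1 : Hi ((H' - H) (Hi' v)) = Hi v - Hi' v := by
      have : (H' - H) (Hi' v) = H' (Hi' v) - H (Hi' v) := by simp
      rw [this, map_sub, hH'inv]
      congr 1
      -- Hi (H (Hi' v)) = Hi' v : need Hi ∘ H = id, i.e. left inverse
      -- from hHinv: H ∘ Hi = id; since H injective-free: apply H to both sides
      have hH : ∀ x, H (Hi (H x)) = H x := fun x => hHinv (H x)
      -- H is injective
      have hinj : Function.Injective H := by
        have : Function.LeftInverse H Hi := hHinv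
        intro a b hab
        have ha : Hi (H a) = Hi (H b) := by rw [hab]
        -- need left inverse the other way; use coercivity-based injectivity directly
        by_contra hne
        have hx : H (a - b) = 0 := by simp [map_sub, hab]
        have h1 := hHc (a - b)
        rw [hx] at h1
        simp only [inner_zero_left] at h1
        have hab0 : ‖a - b‖ ^ 2 ≤ 0 := by nlinarith
        have : a - b = 0 := by
          have := sq_nonneg ‖a - b‖
          have h2 : ‖a - b‖ ^ 2 = 0 := le_antisymm hab0 this
          have : ‖a - b‖ = 0 := by nlinarith [norm_nonneg (a - b)]
          exact norm_eq_zero.mp this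
        exact hne (sub_eq_zero.mp this)
      exact hinj (hHinv (H (Hi' v)))
    rw [h1]
    simp only [ContinuousLinearMap.sub_apply, map_sub]
    abel
  set α := Cf / lam * ‖V - V'‖ with hα
  set β := Cf * Cg / lam ^ 2 * ‖H - H'‖ with hβ
  set γ := Cg / lam * ‖v - v'‖ with hγ
  have hHiv : ‖Hi v‖ ≤ Cf / lam := by
    calc ‖Hi v‖ ≤ ‖Hi‖ * ‖v‖ := Hi.le_opNorm v
    _ ≤ (1 / lam) * Cf := by
        apply mul_le_mul hHn hv (norm_nonneg v)
        positivity
    _ = Cf / lam := by ring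
  have hA : ‖(V - V') (Hi v)‖ ≤ α := by
    calc ‖(V - V') (Hi v)‖ ≤ ‖V - V'‖ * ‖Hi v‖ := (V - V').le_opNorm _
    _ ≤ ‖V - V'‖ * (Cf / lam) := by
        apply mul_le_mul_of_nonneg_left hHiv (norm_nonneg _)
    _ = α := by rw [hα]; ring
  have hB : ‖V' (Hi ((H' - H) (Hi' v)))‖ ≤ β := by
    have h1 : ‖Hi' v‖ ≤ Cf / lam := by
      calc ‖Hi' v‖ ≤ ‖Hi'‖ * ‖v‖ := Hi'.le_opNorm v
      _ ≤ (1 / lam) * Cf := by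
          apply mul_le_mul hH'n hv (norm_nonneg v); positivity
      _ = Cf / lam := by ring
    have h2 : ‖(H' - H) (Hi' v)‖ ≤ ‖H - H'‖ * (Cf / lam) := by
      calc ‖(H' - H) (Hi' v)‖ ≤ ‖H' - H‖ * ‖Hi' v‖ := (H' - H).le_opNorm _
      _ ≤ ‖H - H'‖ * (Cf / lam) := by
          rw [norm_sub_rev]
          exact mul_le_mul_of_nonneg_left h1 (norm_nonneg _)
    have h3 : ‖Hi ((H' - H) (Hi' v))‖ ≤ (1 / lam) * (‖H - H'‖ * (Cf / lam)) := by
      calc ‖Hi ((H' - H) (Hi' v))‖ ≤ ‖Hi‖ * ‖(H' - H) (Hi' v)‖ := Hi.le_opNorm _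
      _ ≤ (1 / lam) * (‖H - H'‖ * (Cf / lam)) := by
          apply mul_le_mul hHn h2 (norm_nonneg _); positivity
    calc ‖V' (Hi ((H' - H) (Hi' v)))‖ ≤ ‖V'‖ * ‖Hi ((H' - H) (Hi' v))‖ := V'.le_opNorm _
    _ ≤ Cg * ((1 / lam) * (‖H - H'‖ * (Cf / lam))) := by
        apply mul_le_mul hV' h3 (norm_nonneg _) hCg
    _ = β := by rw [hβ]; field_simp
  have hC : ‖V' (Hi' (v - v'))‖ ≤ γ := by
    have h1 : ‖Hi' (v - v')‖ ≤ (1 / lam) * ‖v - v'‖ := by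
      calc ‖Hi' (v - v')‖ ≤ ‖Hi'‖ * ‖v - v'‖ := Hi'.le_opNorm _
      _ ≤ (1 / lam) * ‖v - v'‖ := mul_le_mul_of_nonneg_right hH'n (norm_nonneg _)
    calc ‖V' (Hi' (v - v'))‖ ≤ ‖V'‖ * ‖Hi' (v - v')‖ := V'.le_opNorm _
    _ ≤ Cg * ((1 / lam) * ‖v - v'‖) := by
        apply mul_le_mul hV' h1 (norm_nonneg _) hCg
    _ = γ := by rw [hγ]; ring
  have htri : ‖V (Hi v) - V' (Hi' v')‖ ≤ α + β + γ := by
    rw [hid]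
    calc ‖(V - V') (Hi v) + V' (Hi ((H' - H) (Hi' v))) + V' (Hi' (v - v'))‖
        ≤ ‖(V - V') (Hi v) + V' (Hi ((H' - H) (Hi' v)))‖ + ‖V' (Hi' (v - v'))‖ :=
          norm_add_le _ _
      _ ≤ ‖(V - V') (Hi v)‖ + ‖V' (Hi ((H' - H) (Hi' v)))‖ + ‖V' (Hi' (v - v'))‖ := by
          linarith [norm_add_le ((V - V') (Hi v)) (V' (Hi ((H' - H) (Hi' v))))]
      _ ≤ α + β + γ := by linarith
  have hαn : 0 ≤ α := mul_nonneg (by positivity) (norm_nonneg _)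
  have hβn : 0 ≤ β := mul_nonneg (by positivity) (norm_nonneg _)
  have hγn : 0 ≤ γ := mul_nonneg (by positivity) (norm_nonneg _)
  have key : ‖V (Hi v) - V' (Hi' v')‖ ^ 2 ≤ 3 * α ^ 2 + 3 * β ^ 2 + 3 * γ ^ 2 := by
    nlinarith [norm_nonneg (V (Hi v) - V' (Hi' v')), sq_nonneg (α - β), sq_nonneg (β - γ),
      sq_nonneg (α - γ), htri]
  have heq : 3 * α ^ 2 + 3 * β ^ 2 + 3 * γ ^ 2
      = 3 * (Cf ^ 2 / lam ^ 2) * ‖V - V'‖ ^ 2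
        + 3 * (Cf ^ 2 * Cg ^ 2 / lam ^ 4) * ‖H - H'‖ ^ 2
        + 3 * (Cg ^ 2 / lam ^ 2) * ‖v - v'‖ ^ 2 := by
    rw [hα, hβ, hγ]; field_simp
  linarith
end

section
/- Under the assumptions that ∇_x f(x,·) is L_{fx}-Lipschitz, ∇_y f(x,·) is L_{fy}-Lipschitz and bounded by C_{fy}, ∇²_{xy}g(x,·) is L_{gxy}-Lipschitz and bounded (in spectral norm) by C_{gxy}, ∇²_{yy}g(x,·) is L_{gyy}-Lipschitz and ∇²_{yy}g(x,y) ⪰ λI, the map Φ(y) = ∇_x f(x,y) - ∇²_{xy}g(x,y)[∇²_{yy}g(x,y)]⁻¹ ∇_y f(x,y) satisfies ‖Φ(y) - Φ(y')‖² ≤ C₀‖y - y'‖² with C₀ = 2L_{fx}² + 6C_{fy}²L_{gxy}²/λ² + 6C_{fy}²C_{gxy}²L_{gyy}²/λ⁴ + 6L_{fy}²C_{gxy}²/λ². -/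
private lemma sq_bound_aux (x a b c e : ℝ) (hx : 0 ≤ x) (h : x ≤ a + b + c + e) :
    x ^ 2 ≤ 2 * a ^ 2 + 6 * b ^ 2 + 6 * c ^ 2 + 6 * e ^ 2 := by
  nlinarith [sq_nonneg (a - b - c - e), sq_nonneg (b - c), sq_nonneg (b - e),
    sq_nonneg (c - e), sq_nonneg (a + b + c + e)]


/-- Lipschitz continuity of the hypergradient map
`Φ(y) = ∇_x f(x,y) - ∇²_{xy}g(x,y)[∇²_{yy}g(x,y)]⁻¹ ∇_y f(x,y)`. -/
theorem stmt6 {d d' : ℕ}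
    (A : EuclideanSpace ℝ (Fin d') → EuclideanSpace ℝ (Fin d))
    (B : EuclideanSpace ℝ (Fin d') → (EuclideanSpace ℝ (Fin d') →L[ℝ] EuclideanSpace ℝ (Fin d)))
    (Hm : EuclideanSpace ℝ (Fin d') → (EuclideanSpace ℝ (Fin d') →L[ℝ] EuclideanSpace ℝ (Fin d')))
    (v : EuclideanSpace ℝ (Fin d') → EuclideanSpace ℝ (Fin d'))
    (lam Lfx Lfy Lgxy Lgyy Cfy Cgxy : ℝ) (hlam : 0 < lam)
    (hA : ∀ y y', ‖A y - A y'‖ ≤ Lfx * ‖y - y'‖)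
    (hvlip : ∀ y y', ‖v y - v y'‖ ≤ Lfy * ‖y - y'‖)
    (hvbd : ∀ y, ‖v y‖ ≤ Cfy)
    (hBlip : ∀ y y', ‖B y - B y'‖ ≤ Lgxy * ‖y - y'‖)
    (hBbd : ∀ y, ‖B y‖ ≤ Cgxy)
    (hHlip : ∀ y y', ‖Hm y - Hm y'‖ ≤ Lgyy * ‖y - y'‖)
    (hHsa : ∀ y, IsSelfAdjoint (Hm y))
    (hHc : ∀ y x, lam * ‖x‖ ^ 2 ≤ (inner ℝ (Hm y x) x : ℝ))
    (Φ : EuclideanSpace ℝ (Fin d') → EuclideanSpace ℝ (Fin d))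
    (hΦ : ∀ y, Φ y = A y - B y (Ring.inverse (Hm y) (v y))) :
    ∀ y y', ‖Φ y - Φ y'‖ ^ 2
      ≤ (2 * Lfx ^ 2 + 6 * Cfy ^ 2 * Lgxy ^ 2 / lam ^ 2
          + 6 * Cfy ^ 2 * Cgxy ^ 2 * Lgyy ^ 2 / lam ^ 4
          + 6 * Lfy ^ 2 * Cgxy ^ 2 / lam ^ 2) * ‖y - y'‖ ^ 2 := by
  intro y y'
  set w : EuclideanSpace ℝ (Fin d') → EuclideanSpace ℝ (Fin d') :=
    fun z => Ring.inverse (Hm z) (v z) with hw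
  -- coercivity lower bound
  have hlow : ∀ z x, lam * ‖x‖ ≤ ‖Hm z x‖ := by
    intro z x
    rcases eq_or_ne x 0 with rfl | hx
    · simp
    · have h1 := hHc z x
      have h2 : (inner ℝ (Hm z x) x : ℝ) ≤ ‖Hm z x‖ * ‖x‖ := real_inner_le_norm _ _
      have hxp : 0 < ‖x‖ := norm_pos_iff.mpr hx
      nlinarith
  -- each Hm z is invertible
  have hunit : ∀ z, IsUnit (Hm z) := by
    intro z
    have hinj : Function.Injective ((Hm z : EuclideanSpace ℝ (Fin d') →ₗ[ℝ]
        EuclideanSpace ℝ (Fin d'))) := by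
      intro a b hab
      have h0 : Hm z (a - b) = 0 := by
        rw [map_sub]; rw [show Hm z a = Hm z b from hab]; simp
      have h1 := hlow z (a - b)
      rw [h0, norm_zero] at h1
      have h2 : ‖a - b‖ ≤ 0 := by nlinarith [norm_nonneg (a - b)]
      have := norm_le_zero_iff.mp h2
      exact sub_eq_zero.mp this
    have hsurj := LinearMap.injective_iff_surjective.mp hinj
    let e := LinearEquiv.ofBijective _ ⟨hinj, hsurj⟩
    let E := e.toContinuousLinearEquiv
    refine ⟨E.toUnit, ?_⟩
    ext x
    rfl
  -- Hm z applied to its Ring.inverse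
  have hcanc : ∀ z u, Hm z (Ring.inverse (Hm z) u) = u := by
    intro z u
    have h := Ring.mul_inverse_cancel _ (hunit z)
    have := congrArg (fun T => T u) h
    simpa [ContinuousLinearMap.mul_apply] using this
  -- norm bound on inverse
  have hinvb : ∀ z u, lam * ‖Ring.inverse (Hm z) u‖ ≤ ‖u‖ := by
    intro z u
    have := hlow z (Ring.inverse (Hm z) u)
    rwa [hcanc z u] at this
  have hlampos := hlam
  have hwbd : ∀ z, ‖w z‖ ≤ Cfy / lam := by
    intro z
    have h := (hinvb z (v z)).trans (hvbd z)
    rw [le_div_iff₀ hlam]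
    linarith [h]
  -- bound on w y - w y'
  have hwdiff : ‖w y - w y'‖ ≤ (Lgyy * (Cfy / lam) / lam + Lfy / lam) * ‖y - y'‖ := by
    have key : Hm y' (w y - w y') = (Hm y' - Hm y) (w y) + (v y - v y') := by
      rw [map_sub]
      rw [hw]
      simp only [ContinuousLinearMap.sub_apply]
      rw [hcanc y' (v y')]
      abel_nf
      rw [hcanc y (v y)]
      abel
    have h1 : lam * ‖w y - w y'‖ ≤ ‖Hm y' (w y - w y')‖ := hlow y' _
    have h2 : ‖Hm y' (w y - w y')‖ ≤ ‖(Hm y' - Hm y) (w y)‖ + ‖v y - v y'‖ := by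
      rw [key]; exact norm_add_le _ _
    have h3 : ‖(Hm y' - Hm y) (w y)‖ ≤ (Lgyy * ‖y - y'‖) * (Cfy / lam) := by
      calc ‖(Hm y' - Hm y) (w y)‖ ≤ ‖Hm y' - Hm y‖ * ‖w y‖ :=
            ContinuousLinearMap.le_opNorm _ _
        _ ≤ (Lgyy * ‖y - y'‖) * (Cfy / lam) := by
            apply mul_le_mul _ (hwbd y) (norm_nonneg _)
            · exact le_trans (norm_nonneg _) (by
                have := hHlip y' y
                rwa [norm_sub_rev y' y] at this)
            · have := hHlip y' y
              rwa [norm_sub_rev y' y] at this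
    have h4 := hvlip y y'
    have h5 : lam * ‖w y - w y'‖ ≤ Lgyy * ‖y - y'‖ * (Cfy / lam) + Lfy * ‖y - y'‖ := by
      linarith
    have heq : (Lgyy * (Cfy / lam) / lam + Lfy / lam) * ‖y - y'‖
        = (Lgyy * ‖y - y'‖ * (Cfy / lam) + Lfy * ‖y - y'‖) / lam := by
      field_simp
    rw [heq, le_div_iff₀ hlam]
    nlinarith
  -- main decomposition
  have hdec : Φ y - Φ y' =
      (A y - A y') - ((B y - B y') (w y) + (B y') (w y - w y')) := by
    rw [hΦ y, hΦ y']
    simp only [ContinuousLinearMap.sub_apply, map_sub, ← hw]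
    abel
  have hnorm : ‖Φ y - Φ y'‖ ≤
      Lfx * ‖y - y'‖ + (Lgxy * ‖y - y'‖) * (Cfy / lam)
        + Cgxy * ((Lgyy * (Cfy / lam) / lam + Lfy / lam) * ‖y - y'‖) := by
    rw [hdec]
    have t1 : ‖(B y - B y') (w y)‖ ≤ (Lgxy * ‖y - y'‖) * (Cfy / lam) := by
      calc ‖(B y - B y') (w y)‖ ≤ ‖B y - B y'‖ * ‖w y‖ :=
            ContinuousLinearMap.le_opNorm _ _
        _ ≤ (Lgxy * ‖y - y'‖) * (Cfy / lam) :=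
            mul_le_mul (hBlip y y') (hwbd y) (norm_nonneg _)
              (le_trans (norm_nonneg _) (hBlip y y'))
    have t2 : ‖(B y') (w y - w y')‖ ≤
        Cgxy * ((Lgyy * (Cfy / lam) / lam + Lfy / lam) * ‖y - y'‖) := by
      calc ‖(B y') (w y - w y')‖ ≤ ‖B y'‖ * ‖w y - w y'‖ :=
            ContinuousLinearMap.le_opNorm _ _
        _ ≤ Cgxy * ((Lgyy * (Cfy / lam) / lam + Lfy / lam) * ‖y - y'‖) :=
            mul_le_mul (hBbd y') hwdiff (norm_nonneg _)
              (le_trans (norm_nonneg _) (hBbd y'))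
    calc ‖(A y - A y') - ((B y - B y') (w y) + (B y') (w y - w y'))‖
        ≤ ‖A y - A y'‖ + ‖(B y - B y') (w y) + (B y') (w y - w y')‖ :=
          norm_sub_le _ _
      _ ≤ ‖A y - A y'‖ + (‖(B y - B y') (w y)‖ + ‖(B y') (w y - w y')‖) := by
          gcongr; exact norm_add_le _ _
      _ ≤ _ := by
          have := hA y y'
          linarith
  have habs : ‖Φ y - Φ y'‖ ≤ (Lfx * ‖y - y'‖) + ((Lgxy * ‖y - y'‖) * (Cfy / lam))
      + (Cgxy * (Lgyy * (Cfy / lam) / lam * ‖y - y'‖)) + (Cgxy * (Lfy / lam * ‖y - y'‖)) := by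
    refine hnorm.trans (le_of_eq ?_)
    ring
  have hmain := sq_bound_aux _ _ _ _ _ (norm_nonneg _) habs
  refine hmain.trans (le_of_eq ?_)
  field_simp
end

section
/- Let h : ℝ^d → ℝ^{d'} be an L-Lipschitz map, and suppose for each t a random variable ξ_t gives an unbiased estimator h(e;ξ_t) of h(e) with E‖h(e;ξ_t) - h(e)‖² ≤ σ² for all e, and ξ_t is independent of (e_{t-1}, e_t, ĥ_t). Define ĥ_{t+1} = (1-β_t)(ĥ_t - h(e_{t-1};ξ_t)) + h(e_t;ξ_t) with β_t ∈ [0,1]. Then E_t[‖ĥ_{t+1} - h(e_t)‖²] ≤ (1-β_t)‖ĥ_t - h(e_{t-1})‖² + 2β_t²σ² + 2L²‖e_t - e_{t-1}‖². -/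
open MeasureTheory

local notation "⟪" x ", " y "⟫" => @inner ℝ _ _ x y

/-- Expansion of the second moment of a constant plus an L² function. -/
lemma expand_sq {F W : Type*} [NormedAddCommGroup F] [InnerProductSpace ℝ F]
    [CompleteSpace F] [MeasurableSpace W] (μ : Measure W) [IsProbabilityMeasure μ]
    (a : F) (f : W → F) (hf : MemLp f 2 μ) :
    ∫ ω, ‖a + f ω‖ ^ 2 ∂μ = ‖a‖ ^ 2 + 2 * ⟪a, ∫ ω, f ω ∂μ⟫ + ∫ ω, ‖f ω‖ ^ 2 ∂μ := by
  have hfi : Integrable f μ := hf.integrable (by norm_num)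
  have hsq : Integrable (fun ω => ‖f ω‖ ^ 2) μ :=
    (memLp_two_iff_integrable_sq_norm hf.aestronglyMeasurable).mp hf
  have hinner : Integrable (fun ω => ⟪a, f ω⟫) μ := hfi.const_inner a
  have hinner2 : Integrable (fun ω => 2 * ⟪a, f ω⟫) μ := hinner.const_mul 2
  have hi2 : Integrable (fun ω => 2 * ⟪a, f ω⟫ + ‖f ω‖ ^ 2) μ := hinner2.add hsq
  have : ∫ ω, ‖a + f ω‖ ^ 2 ∂μ
      = ∫ ω, (‖a‖ ^ 2 + (2 * ⟪a, f ω⟫ + ‖f ω‖ ^ 2)) ∂μ := by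
    congr 1; funext ω; rw [norm_add_sq_real]; ring
  rw [this, integral_add (integrable_const _) hi2, integral_add hinner2 hsq,
    integral_const, integral_const_mul, integral_inner hfi]
  simp [add_assoc]

set_option maxHeartbeats 1000000 in
/-- STORM variance-reduction recursion (one step, unprojected). -/
theorem stmt8 {E F W : Type*} [NormedAddCommGroup E]
    [NormedAddCommGroup F] [InnerProductSpace ℝ F] [CompleteSpace F]
    [MeasurableSpace W] (μ : Measure W) [IsProbabilityMeasure μ]
    (h : E → F) (H : E → W → F) (L σ β : ℝ)
    (hβ0 : 0 ≤ β) (hβ1 : β ≤ 1)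
    (hmem : ∀ e, MemLp (H e) 2 μ)
    (hunbiased : ∀ e, ∫ ω, H e ω ∂μ = h e)
    (hvar : ∀ e, ∫ ω, ‖H e ω - h e‖ ^ 2 ∂μ ≤ σ ^ 2)
    (hlip : ∀ ω e e', ‖H e ω - H e' ω‖ ≤ L * ‖e - e'‖)
    (e₀ e₁ : E) (hhat : F) :
    ∫ ω, ‖((1 - β) • (hhat - H e₀ ω) + H e₁ ω) - h e₁‖ ^ 2 ∂μ
      ≤ (1 - β) * ‖hhat - h e₀‖ ^ 2 + 2 * β ^ 2 * σ ^ 2 + 2 * L ^ 2 * ‖e₁ - e₀‖ ^ 2 := by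
  set a : F := (1 - β) • (hhat - h e₀) with ha
  set X : W → F := fun ω => (1 - β) • (h e₀ - H e₀ ω) + (H e₁ ω - h e₁) with hXdef
  set Y : W → F := fun ω => (H e₁ ω - H e₀ ω) - (h e₁ - h e₀) with hYdef
  set g : W → F := fun ω => H e₁ ω - h e₁ with hgdef
  have hg₀ : MemLp (fun ω => h e₀ - H e₀ ω) 2 μ := (memLp_const _).sub (hmem e₀)
  have hg : MemLp g 2 μ := (hmem e₁).sub (memLp_const _)
  have hΔ : MemLp (fun ω => H e₁ ω - H e₀ ω) 2 μ := (hmem e₁).sub (hmem e₀)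
  have hY : MemLp Y 2 μ := hΔ.sub (memLp_const _)
  have hXmem : MemLp X 2 μ := (hg₀.const_smul _).add hg
  have hHint : ∀ e, Integrable (H e) μ := fun e => (hmem e).integrable (by norm_num)
  have sqint : ∀ (f : W → F), MemLp f 2 μ → Integrable (fun ω => ‖f ω‖ ^ 2) μ :=
    fun f hf => (memLp_two_iff_integrable_sq_norm hf.aestronglyMeasurable).mp hf
  -- rewrite the integrand
  have hrw : ∀ ω, ((1 - β) • (hhat - H e₀ ω) + H e₁ ω) - h e₁ = a + X ω := by
    intro ω; simp only [ha, hXdef]; module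
  -- X has mean zero
  have hXint : ∫ ω, X ω ∂μ = 0 := by
    have hi1 : Integrable (fun ω => (1 - β) • (h e₀ - H e₀ ω)) μ :=
      (hg₀.integrable (by norm_num)).smul _
    have hi2 : Integrable (fun ω => H e₁ ω - h e₁) μ := hg.integrable (by norm_num)
    have : ∫ ω, ((1 - β) • (h e₀ - H e₀ ω) + (H e₁ ω - h e₁)) ∂μ = 0 := by
      rw [integral_add hi1 hi2, integral_smul, integral_sub (integrable_const _) (hHint e₀),
        integral_sub (hHint e₁) (integrable_const _), hunbiased, hunbiased]
      simp
    simpa [hXdef] using this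
  -- the expansion
  have hexp : ∫ ω, ‖((1 - β) • (hhat - H e₀ ω) + H e₁ ω) - h e₁‖ ^ 2 ∂μ
      = ‖a‖ ^ 2 + ∫ ω, ‖X ω‖ ^ 2 ∂μ := by
    have := expand_sq μ a X hXmem
    simp only [hrw, this, hXint, inner_zero_right]
    ring
  -- second moment of Y is at most second moment of Δ
  have hΔmean : ∫ ω, (H e₁ ω - H e₀ ω) ∂μ = h e₁ - h e₀ := by
    rw [integral_sub (hHint e₁) (hHint e₀), hunbiased, hunbiased]
  have hYbound : ∫ ω, ‖Y ω‖ ^ 2 ∂μ ≤ L ^ 2 * ‖e₁ - e₀‖ ^ 2 := by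
    have hYeq : (fun ω => ‖Y ω‖ ^ 2)
        = fun ω => ‖-(h e₁ - h e₀) + (H e₁ ω - H e₀ ω)‖ ^ 2 := by
      funext ω; simp only [hYdef]; congr 1; abel
    have hexpY := expand_sq μ (-(h e₁ - h e₀)) (fun ω => H e₁ ω - H e₀ ω) hΔ
    rw [hΔmean, norm_neg, inner_neg_left, real_inner_self_eq_norm_sq] at hexpY
    have h1 : ∫ ω, ‖H e₁ ω - H e₀ ω‖ ^ 2 ∂μ ≤ L ^ 2 * ‖e₁ - e₀‖ ^ 2 := by
      have : ∫ ω, ‖H e₁ ω - H e₀ ω‖ ^ 2 ∂μ ≤ ∫ _ω, (L * ‖e₁ - e₀‖) ^ 2 ∂μ := by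
        refine integral_mono (sqint _ hΔ) (integrable_const _) fun ω => ?_
        exact pow_le_pow_left₀ (norm_nonneg _) (hlip ω e₁ e₀) 2
      simpa [mul_pow] using this
    have h2 : (0:ℝ) ≤ ‖h e₁ - h e₀‖ ^ 2 := sq_nonneg _
    calc ∫ ω, ‖Y ω‖ ^ 2 ∂μ
        = ∫ ω, ‖-(h e₁ - h e₀) + (H e₁ ω - H e₀ ω)‖ ^ 2 ∂μ := by rw [hYeq]
      _ = ‖h e₁ - h e₀‖ ^ 2 + 2 * -(‖h e₁ - h e₀‖ ^ 2)
            + ∫ ω, ‖H e₁ ω - H e₀ ω‖ ^ 2 ∂μ := hexpY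
      _ ≤ L ^ 2 * ‖e₁ - e₀‖ ^ 2 := by nlinarith
  -- bound the second moment of X
  have hXbound : ∫ ω, ‖X ω‖ ^ 2 ∂μ
      ≤ 2 * (1 - β) ^ 2 * ∫ ω, ‖Y ω‖ ^ 2 ∂μ + 2 * β ^ 2 * ∫ ω, ‖g ω‖ ^ 2 ∂μ := by
    have hpt : ∀ ω, ‖X ω‖ ^ 2 ≤ 2 * (1 - β) ^ 2 * ‖Y ω‖ ^ 2 + 2 * β ^ 2 * ‖g ω‖ ^ 2 := by
      intro ω
      have hXeq : X ω = (1 - β) • Y ω + β • g ω := by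
        simp only [hXdef, hYdef, hgdef]; module
      have htri : ‖X ω‖ ≤ ‖(1 - β) • Y ω‖ + ‖β • g ω‖ := hXeq ▸ norm_add_le _ _
      have h1 : ‖(1 - β) • Y ω‖ = |1 - β| * ‖Y ω‖ := by rw [norm_smul, Real.norm_eq_abs]
      have h2 : ‖β • g ω‖ = |β| * ‖g ω‖ := by rw [norm_smul, Real.norm_eq_abs]
      have hX0 : 0 ≤ ‖X ω‖ := norm_nonneg _
      nlinarith [norm_nonneg ((1 - β) • Y ω), norm_nonneg (β • g ω), sq_abs (1 - β), sq_abs β,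
        sq_nonneg (‖(1 - β) • Y ω‖ - ‖β • g ω‖)]
    have hiY : Integrable (fun ω => 2 * (1 - β) ^ 2 * ‖Y ω‖ ^ 2) μ := (sqint _ hY).const_mul _
    have hig : Integrable (fun ω => 2 * β ^ 2 * ‖g ω‖ ^ 2) μ := (sqint _ hg).const_mul _
    have hisum : Integrable
        (fun ω => 2 * (1 - β) ^ 2 * ‖Y ω‖ ^ 2 + 2 * β ^ 2 * ‖g ω‖ ^ 2) μ := hiY.add hig
    have := integral_mono (sqint _ hXmem) hisum hpt
    rwa [integral_add hiY hig, integral_const_mul, integral_const_mul] at this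
  -- put everything together
  have hgvar : ∫ ω, ‖g ω‖ ^ 2 ∂μ ≤ σ ^ 2 := hvar e₁
  have hYnn : 0 ≤ ∫ ω, ‖Y ω‖ ^ 2 ∂μ := integral_nonneg fun ω => sq_nonneg _
  have hgnn : 0 ≤ ∫ ω, ‖g ω‖ ^ 2 ∂μ := integral_nonneg fun ω => sq_nonneg _
  have hanorm : ‖a‖ ^ 2 = (1 - β) ^ 2 * ‖hhat - h e₀‖ ^ 2 := by
    rw [ha, norm_smul, Real.norm_eq_abs, mul_pow, sq_abs]
  rw [hexp, hanorm]
  have hA : (0:ℝ) ≤ ‖hhat - h e₀‖ ^ 2 := sq_nonneg _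
  nlinarith [mul_nonneg (mul_nonneg hβ0 (sub_nonneg.2 hβ1)) hA,
    mul_nonneg (sq_nonneg β) (sub_nonneg.2 hgvar),
    mul_nonneg (mul_nonneg hβ0 (by linarith : (0:ℝ) ≤ 2 - β)) hYnn,
    hXbound, hYbound]
end

section
/- With the same setting as the STORM recursion, if additionally h(e) ∈ Ω for a closed convex set Ω and ĥ_{t+1} = Π_Ω[(1-β_t)(ĥ_t - h(e_{t-1};ξ_t)) + h(e_t;ξ_t)], then the same bound holds: E_t[‖ĥ_{t+1} - h(e_t)‖²] ≤ (1-β_t)‖ĥ_t - h(e_{t-1})‖² + 2β_t²σ² + 2L²‖e_t - e_{t-1}‖². -/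
open MeasureTheory

local notation "⟪" x ", " y "⟫" => @inner ℝ _ _ x y

section aux

variable {F : Type*} [NormedAddCommGroup F] [InnerProductSpace ℝ F]

/-- Squared-distance contraction of projection onto a convex set. -/
lemma proj_sq_le {S : Set F} (hSconv : Convex ℝ S)
    (P : F → F) (hP : ∀ a, P a ∈ S ∧ ∀ b ∈ S, ‖a - P a‖ ≤ ‖a - b‖)
    (a c : F) (hc : c ∈ S) : ‖P a - c‖ ^ 2 ≤ ‖a - c‖ ^ 2 := by
  obtain ⟨hmem, hmin⟩ := hP a
  have : Nonempty S := ⟨⟨c, hc⟩⟩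
  have heq : ‖a - P a‖ = ⨅ w : S, ‖a - w‖ := by
    apply le_antisymm
    · exact le_ciInf fun w => hmin w w.2
    · exact ciInf_le ⟨0, fun _ ⟨_, h⟩ => h ▸ norm_nonneg _⟩ (⟨P a, hmem⟩ : S)
  have hinner : ⟪a - P a, c - P a⟫ ≤ 0 :=
    ((norm_eq_iInf_iff_real_inner_le_zero hSconv hmem).mp heq) c hc
  have hexp : ‖a - c‖ ^ 2 = ‖a - P a‖ ^ 2 + 2 * ⟪a - P a, P a - c⟫ + ‖P a - c‖ ^ 2 := by
    have := norm_add_sq_real (a - P a) (P a - c)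
    simpa using this
  have h2 : ⟪a - P a, P a - c⟫ = -⟪a - P a, c - P a⟫ := by
    rw [← inner_neg_right]; congr 1; abel
  nlinarith [sq_nonneg ‖a - P a‖]

end aux

section intaux

variable {F W : Type*} [NormedAddCommGroup F] [InnerProductSpace ℝ F] [CompleteSpace F]
  [MeasurableSpace W] {μ : Measure W} [IsProbabilityMeasure μ]

lemma integrable_sq_norm {Z : W → F} (hZ : MemLp Z 2 μ) :
    Integrable (fun ω => ‖Z ω‖ ^ 2) μ :=
  (memLp_two_iff_integrable_sq_norm hZ.aestronglyMeasurable).mp hZ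

lemma int_add_sq (Y : F) (Z : W → F) (hZ : MemLp Z 2 μ) :
    ∫ ω, ‖Y + Z ω‖ ^ 2 ∂μ
      = ‖Y‖ ^ 2 + 2 * ⟪Y, ∫ ω, Z ω ∂μ⟫ + ∫ ω, ‖Z ω‖ ^ 2 ∂μ := by
  have hZ1 : Integrable Z μ := hZ.integrable one_le_two
  have h1 : Integrable (fun ω => ⟪Y, Z ω⟫) μ := hZ1.const_inner Y
  have h2 : Integrable (fun ω => ‖Z ω‖ ^ 2) μ := integrable_sq_norm hZ
  calc ∫ ω, ‖Y + Z ω‖ ^ 2 ∂μ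
      = ∫ ω, (‖Y‖ ^ 2 + 2 * ⟪Y, Z ω⟫ + ‖Z ω‖ ^ 2) ∂μ := by
        congr 1; ext ω; exact norm_add_sq_real Y (Z ω)
    _ = ∫ ω, (‖Y‖ ^ 2 + 2 * ⟪Y, Z ω⟫) ∂μ + ∫ ω, ‖Z ω‖ ^ 2 ∂μ := by
        exact integral_add ((integrable_const _).add (h1.const_mul 2)) h2
    _ = ‖Y‖ ^ 2 + 2 * ⟪Y, ∫ ω, Z ω ∂μ⟫ + ∫ ω, ‖Z ω‖ ^ 2 ∂μ := by
        rw [integral_add (integrable_const _) (h1.const_mul 2), integral_const,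
          integral_const_mul, integral_inner hZ1, probReal_univ]
        simp

end intaux

/-- Projected STORM variance-reduction recursion (one step): the same bound holds when the
estimator is projected onto a closed convex set `S` containing `h(e)` for every `e`. -/
theorem stmt9 {E F W : Type*} [NormedAddCommGroup E]
    [NormedAddCommGroup F] [InnerProductSpace ℝ F] [CompleteSpace F]
    [MeasurableSpace W] (μ : Measure W) [IsProbabilityMeasure μ]
    (h : E → F) (H : E → W → F) (L σ β : ℝ)
    (hβ0 : 0 ≤ β) (hβ1 : β ≤ 1)
    (hmem : ∀ e, MemLp (H e) 2 μ)
    (hunbiased : ∀ e, ∫ ω, H e ω ∂μ = h e)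
    (hvar : ∀ e, ∫ ω, ‖H e ω - h e‖ ^ 2 ∂μ ≤ σ ^ 2)
    (hlip : ∀ ω e e', ‖H e ω - H e' ω‖ ≤ L * ‖e - e'‖)
    (S : Set F) (hSne : S.Nonempty) (hSconv : Convex ℝ S) (hSclosed : IsClosed S)
    (hhS : ∀ e, h e ∈ S)
    (P : F → F) (hP : ∀ a, P a ∈ S ∧ ∀ b ∈ S, ‖a - P a‖ ≤ ‖a - b‖)
    (e₀ e₁ : E) (hhat : F) :
    ∫ ω, ‖P ((1 - β) • (hhat - H e₀ ω) + H e₁ ω) - h e₁‖ ^ 2 ∂μ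
      ≤ (1 - β) * ‖hhat - h e₀‖ ^ 2 + 2 * β ^ 2 * σ ^ 2 + 2 * L ^ 2 * ‖e₁ - e₀‖ ^ 2 := by
  -- notation
  set Y : F := (1 - β) • (hhat - h e₀) with hY
  set Z : W → F := fun ω => (H e₁ ω - h e₁) - (1 - β) • (H e₀ ω - h e₀) with hZdef
  set X : W → F := fun ω => (1 - β) • (hhat - H e₀ ω) + H e₁ ω with hXdef
  have hK : MemLp (fun ω => H e₁ ω - h e₁) 2 μ := (hmem e₁).sub (memLp_const _)
  have hG : MemLp (fun ω => H e₀ ω - h e₀) 2 μ := (hmem e₀).sub (memLp_const _)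
  have hZmem : MemLp Z 2 μ := hK.sub (hG.const_smul (1 - β))
  have hXdecomp : ∀ ω, X ω - h e₁ = Y + Z ω := by
    intro ω
    simp only [hXdef, hY, hZdef, smul_sub]
    abel
  -- Step 1: projection contracts pointwise
  have step1 : ∫ ω, ‖P (X ω) - h e₁‖ ^ 2 ∂μ ≤ ∫ ω, ‖X ω - h e₁‖ ^ 2 ∂μ := by
    have hint : Integrable (fun ω => ‖X ω - h e₁‖ ^ 2) μ := by
      have : MemLp (fun ω => X ω - h e₁) 2 μ := by
        have : (fun ω => X ω - h e₁) = fun ω => Y + Z ω := funext hXdecomp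
        rw [this]
        exact MemLp.add (f := fun _ => Y) (g := Z) (memLp_const Y) hZmem
      exact integrable_sq_norm this
    refine integral_mono_of_nonneg (Filter.Eventually.of_forall fun ω => by positivity)
      hint (Filter.Eventually.of_forall fun ω => ?_)
    exact proj_sq_le hSconv P hP (X ω) (h e₁) (hhS e₁)
  -- mean of Z is zero
  have hZint : ∫ ω, Z ω ∂μ = 0 := by
    have h1 : Integrable (fun ω => H e₁ ω - h e₁) μ := hK.integrable one_le_two
    have h0 : Integrable (fun ω => (1 - β) • (H e₀ ω - h e₀)) μ :=
      ((hG.const_smul (1 - β)).integrable one_le_two)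
    rw [hZdef]
    rw [integral_sub h1 h0, integral_sub ((hmem e₁).integrable one_le_two) (integrable_const _),
      integral_smul, integral_sub ((hmem e₀).integrable one_le_two) (integrable_const _),
      integral_const, integral_const, probReal_univ, hunbiased, hunbiased]
    simp
  -- Step 2: main expansion
  have step2 : ∫ ω, ‖X ω - h e₁‖ ^ 2 ∂μ = ‖Y‖ ^ 2 + ∫ ω, ‖Z ω‖ ^ 2 ∂μ := by
    have : (fun ω => ‖X ω - h e₁‖ ^ 2) = fun ω => ‖Y + Z ω‖ ^ 2 := by
      funext ω; rw [hXdecomp ω]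
    rw [this, int_add_sq Y Z hZmem, hZint]
    simp
  -- Step 3: bound ∫‖Z‖²
  -- Z ω = β • K ω + (1-β) • (K ω - G ω)
  have hZsplit : ∀ ω, Z ω = β • (H e₁ ω - h e₁)
      + (1 - β) • ((H e₁ ω - H e₀ ω) - (h e₁ - h e₀)) := by
    intro ω
    simp only [hZdef, smul_sub, sub_smul, one_smul]
    abel
  have hWmem : MemLp (fun ω => (H e₁ ω - H e₀ ω) - (h e₁ - h e₀)) 2 μ :=
    ((hmem e₁).sub (hmem e₀)).sub (memLp_const _)
  -- bound on centered difference
  have hWbound : ∫ ω, ‖(H e₁ ω - H e₀ ω) - (h e₁ - h e₀)‖ ^ 2 ∂μ ≤ L ^ 2 * ‖e₁ - e₀‖ ^ 2 := by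
    have hWm : ∫ ω, (H e₁ ω - H e₀ ω) ∂μ = h e₁ - h e₀ := by
      rw [integral_sub ((hmem e₁).integrable one_le_two) ((hmem e₀).integrable one_le_two),
        hunbiased, hunbiased]
    have hvarW : ∫ ω, ‖(H e₁ ω - H e₀ ω) - (h e₁ - h e₀)‖ ^ 2 ∂μ
        ≤ ∫ ω, ‖H e₁ ω - H e₀ ω‖ ^ 2 ∂μ := by
      have hWmem' : MemLp (fun ω => H e₁ ω - H e₀ ω) 2 μ := (hmem e₁).sub (hmem e₀)
      have : (fun ω => ‖(H e₁ ω - H e₀ ω) - (h e₁ - h e₀)‖ ^ 2)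
          = fun ω => ‖(-(h e₁ - h e₀)) + (H e₁ ω - H e₀ ω)‖ ^ 2 := by
        funext ω; congr 1; abel
      rw [this, int_add_sq _ _ hWmem', hWm]
      have : ⟪-(h e₁ - h e₀), h e₁ - h e₀⟫ = -‖h e₁ - h e₀‖ ^ 2 := by
        rw [inner_neg_left, real_inner_self_eq_norm_sq]
      rw [this]
      have := sq_nonneg ‖h e₁ - h e₀‖
      simp only [norm_neg]
      nlinarith
    have hsq : ∫ ω, ‖H e₁ ω - H e₀ ω‖ ^ 2 ∂μ ≤ L ^ 2 * ‖e₁ - e₀‖ ^ 2 := by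
      have hpt : ∀ ω, ‖H e₁ ω - H e₀ ω‖ ^ 2 ≤ L ^ 2 * ‖e₁ - e₀‖ ^ 2 := by
        intro ω
        have h1 := hlip ω e₁ e₀
        nlinarith [norm_nonneg (H e₁ ω - H e₀ ω)]
      calc ∫ ω, ‖H e₁ ω - H e₀ ω‖ ^ 2 ∂μ ≤ ∫ _ω, L ^ 2 * ‖e₁ - e₀‖ ^ 2 ∂μ :=
            integral_mono (integrable_sq_norm ((hmem e₁).sub (hmem e₀)))
              (integrable_const _) hpt
        _ = L ^ 2 * ‖e₁ - e₀‖ ^ 2 := by simp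
    linarith
  have hZbound : ∫ ω, ‖Z ω‖ ^ 2 ∂μ ≤ 2 * β ^ 2 * σ ^ 2 + 2 * L ^ 2 * ‖e₁ - e₀‖ ^ 2 := by
    have hpt : ∀ ω, ‖Z ω‖ ^ 2 ≤ 2 * β ^ 2 * ‖H e₁ ω - h e₁‖ ^ 2
        + 2 * (1 - β) ^ 2 * ‖(H e₁ ω - H e₀ ω) - (h e₁ - h e₀)‖ ^ 2 := by
      intro ω
      rw [hZsplit ω]
      have h1 := norm_add_le (β • (H e₁ ω - h e₁))
        ((1 - β) • ((H e₁ ω - H e₀ ω) - (h e₁ - h e₀)))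
      rw [norm_smul, norm_smul] at h1
      have hb : ‖β‖ = β := abs_of_nonneg hβ0
      have hb' : ‖(1 : ℝ) - β‖ = 1 - β := abs_of_nonneg (by linarith)
      rw [hb, hb'] at h1
      nlinarith [sq_nonneg (β * ‖H e₁ ω - h e₁‖
        - (1 - β) * ‖(H e₁ ω - H e₀ ω) - (h e₁ - h e₀)‖),
        norm_nonneg (β • (H e₁ ω - h e₁) + (1 - β) • ((H e₁ ω - H e₀ ω) - (h e₁ - h e₀)))]
    have hint1 : Integrable (fun ω => ‖H e₁ ω - h e₁‖ ^ 2) μ := integrable_sq_norm hK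
    have hint2 : Integrable (fun ω => ‖(H e₁ ω - H e₀ ω) - (h e₁ - h e₀)‖ ^ 2) μ :=
      integrable_sq_norm hWmem
    calc ∫ ω, ‖Z ω‖ ^ 2 ∂μ
        ≤ ∫ ω, (2 * β ^ 2 * ‖H e₁ ω - h e₁‖ ^ 2
            + 2 * (1 - β) ^ 2 * ‖(H e₁ ω - H e₀ ω) - (h e₁ - h e₀)‖ ^ 2) ∂μ :=
          integral_mono (integrable_sq_norm hZmem)
            ((hint1.const_mul _).add (hint2.const_mul _)) hpt
      _ = 2 * β ^ 2 * ∫ ω, ‖H e₁ ω - h e₁‖ ^ 2 ∂μ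
            + 2 * (1 - β) ^ 2 * ∫ ω, ‖(H e₁ ω - H e₀ ω) - (h e₁ - h e₀)‖ ^ 2 ∂μ := by
          rw [integral_add (hint1.const_mul _) (hint2.const_mul _),
            integral_const_mul, integral_const_mul]
      _ ≤ 2 * β ^ 2 * σ ^ 2 + 2 * L ^ 2 * ‖e₁ - e₀‖ ^ 2 := by
          have h1 := hvar e₁
          have h2 : 2 * (1 - β) ^ 2 * ∫ ω, ‖(H e₁ ω - H e₀ ω) - (h e₁ - h e₀)‖ ^ 2 ∂μ
              ≤ 2 * L ^ 2 * ‖e₁ - e₀‖ ^ 2 := by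
            have hnn : (0:ℝ) ≤ ∫ ω, ‖(H e₁ ω - H e₀ ω) - (h e₁ - h e₀)‖ ^ 2 ∂μ :=
              integral_nonneg fun ω => by positivity
            have hle : ((1:ℝ) - β) ^ 2 ≤ 1 := by nlinarith
            have := mul_le_mul_of_nonneg_right hle hnn
            linarith
          have h1' := mul_le_mul_of_nonneg_left h1 (by positivity : (0:ℝ) ≤ 2 * β ^ 2)
          linarith
    -- done
  have hYbound : ‖Y‖ ^ 2 ≤ (1 - β) * ‖hhat - h e₀‖ ^ 2 := by
    rw [hY, norm_smul, mul_pow]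
    have hb' : ‖(1 : ℝ) - β‖ = 1 - β := abs_of_nonneg (by linarith)
    rw [hb']
    have h1 : ((1:ℝ) - β) ^ 2 ≤ 1 - β := by nlinarith
    exact mul_le_mul_of_nonneg_right h1 (sq_nonneg _)
  calc ∫ ω, ‖P (X ω) - h e₁‖ ^ 2 ∂μ ≤ ∫ ω, ‖X ω - h e₁‖ ^ 2 ∂μ := step1
    _ = ‖Y‖ ^ 2 + ∫ ω, ‖Z ω‖ ^ 2 ∂μ := step2
    _ ≤ (1 - β) * ‖hhat - h e₀‖ ^ 2 + (2 * β ^ 2 * σ ^ 2 + 2 * L ^ 2 * ‖e₁ - e₀‖ ^ 2) := by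
        linarith
    _ = _ := by ring
end

section
/- Let g(x,·) be λ-strongly convex and L_g-smooth in y with minimizer y*(x), and assume y*(·) is L_y-Lipschitz. Let y_{t+1} = y_t - τ_t τ w with τ ≤ 2/(3L_g), τ_t ≤ 1/2, and x_{t+1} = x_t - γη_t z. Then ‖y_{t+1} - y*(x_{t+1})‖² ≤ (1 - τ_tτλ/4)‖y_t - y*(x_t)‖² + (8τ_tτ/λ)‖∇_y g(x_t,y_t) - w‖² + (8L_y²γ²η_t²/(τ_tτλ))‖z‖² - (1 + τ_tτλ/4)(2τ/τ_t)(1/(2τ) - 3L_g/4)‖y_t - y_{t+1}‖². -/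
set_option maxHeartbeats 1000000

private lemma young_sq (c x y : ℝ) (hc : 0 < c) :
    (x + y) ^ 2 ≤ (1 + c) * x ^ 2 + (1 + 1 / c) * y ^ 2 := by
  have h : c * ((1 + c) * x ^ 2 + (1 + 1 / c) * y ^ 2 - (x + y) ^ 2)
      = (c * x - y) ^ 2 := by
    field_simp
    ring
  nlinarith [sq_nonneg (c * x - y), hc]

private lemma young_norm {F : Type*} [NormedAddCommGroup F] [InnerProductSpace ℝ F]
    (c : ℝ) (hc : 0 < c) (u v : F) :
    ‖u + v‖ ^ 2 ≤ (1 + c) * ‖u‖ ^ 2 + (1 + 1 / c) * ‖v‖ ^ 2 :=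
  le_trans (by
    have := pow_le_pow_left₀ (norm_nonneg (u + v)) (norm_add_le u v) 2
    simpa using this) (young_sq c ‖u‖ ‖v‖ hc)

private lemma step2_scalar (lam Lg τ s a b e p q r T il : ℝ)
    (hlam : 0 < lam) (hlamLg : lam ≤ Lg) (hτ : 0 < τ) (hs : 0 < s) (hsτ : s ≤ τ)
    (hil : lam * il = 1)
    (hT : T = a ^ 2 - 2 * (s * q) + s ^ 2 * b ^ 2)
    (hgrad : lam / 2 * a ^ 2 + τ * r - Lg / 2 * τ ^ 2 * b ^ 2 ≤ p)
    (hrb : b ^ 2 - e * b ≤ r)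
    (hqq : p - e * a ≤ q) :
    T ≤ (1 - s * lam / 2) * a ^ 2 + (4 * s * il) * e ^ 2
      - (s * τ) * (1 - 3 / 2 * (Lg * τ)) * b ^ 2 := by
  have hy1 : 2 * e * a ≤ lam / 2 * a ^ 2 + 2 * il * e ^ 2 := by
    have key : lam * (lam / 2 * a ^ 2 + 2 * il * e ^ 2 - 2 * e * a)
        = (lam * a - 2 * e) ^ 2 / 2 := by linear_combination (2 * e ^ 2) * hil
    nlinarith [sq_nonneg (lam * a - 2 * e), hlam]
  have hy2 : 2 * τ * (e * b) ≤ lam * τ ^ 2 / 2 * b ^ 2 + 2 * il * e ^ 2 := by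
    have key : lam * (lam * τ ^ 2 / 2 * b ^ 2 + 2 * il * e ^ 2 - 2 * τ * (e * b))
        = (lam * τ * b - 2 * e) ^ 2 / 2 := by linear_combination (2 * e ^ 2) * hil
    nlinarith [sq_nonneg (lam * τ * b - 2 * e), hlam]
  have m1 : s * (p - e * a) ≤ s * q := mul_le_mul_of_nonneg_left hqq hs.le
  have m2 : s * (lam / 2 * a ^ 2 + τ * r - Lg / 2 * τ ^ 2 * b ^ 2) ≤ s * p :=
    mul_le_mul_of_nonneg_left hgrad hs.le
  have m3 : (s * τ) * (b ^ 2 - e * b) ≤ (s * τ) * r :=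
    mul_le_mul_of_nonneg_left hrb (by positivity)
  have m4 : s * (2 * e * a) ≤ s * (lam / 2 * a ^ 2 + 2 * il * e ^ 2) :=
    mul_le_mul_of_nonneg_left hy1 hs.le
  have m5 : s * (2 * τ * (e * b)) ≤ s * (lam * τ ^ 2 / 2 * b ^ 2 + 2 * il * e ^ 2) :=
    mul_le_mul_of_nonneg_left hy2 hs.le
  have m6 : s * s * b ^ 2 ≤ (s * τ) * b ^ 2 :=
    mul_le_mul_of_nonneg_right (mul_le_mul_of_nonneg_left hsτ hs.le) (sq_nonneg b)
  have m7 : (s * (τ ^ 2 * b ^ 2) / 2) * lam ≤ (s * (τ ^ 2 * b ^ 2) / 2) * Lg :=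
    mul_le_mul_of_nonneg_left hlamLg (by positivity)
  linarith [hT, m1, m2, m3, m4, m5, m6, m7]

private lemma final_scalar (lam Lg Ly τ τt γ ηt A B Ee Z T2 D2 P il ic : ℝ)
    (hlam : 0 < lam) (hlamLg : lam ≤ Lg) (hτ : 0 < τ) (hτLg3 : τ * (3 * Lg) ≤ 2)
    (hτt : 0 < τt) (hτt2 : τt ≤ 1 / 2)
    (hA : 0 ≤ A) (hB : 0 ≤ B) (hEe : 0 ≤ Ee) (hZ : 0 ≤ Z) (hD2 : 0 ≤ D2)
    (hil : lam * il = 1) (hic : (τt * τ * lam / 4) * ic = 1)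
    (hsplit : P ≤ (1 + τt * τ * lam / 4) * T2 + (1 + ic) * D2)
    (hstep2 : T2 ≤ (1 - (τt * τ) * lam / 2) * A + (4 * (τt * τ) * il) * Ee
      - ((τt * τ) * τ) * (1 - 3 / 2 * (Lg * τ)) * B)
    (hD : D2 ≤ Ly ^ 2 * (γ ^ 2 * (ηt ^ 2 * Z))) :
    P ≤ (1 - τt * τ * lam / 4) * A + (8 * τt * τ * il) * Ee
      + (2 * ic * (Ly ^ 2 * (γ ^ 2 * ηt ^ 2))) * Z
      - (1 + τt * τ * lam / 4) * (((τt * τ) * τ) * (1 - 3 / 2 * (Lg * τ)) * B) := by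
  have hLg : 0 < Lg := lt_of_lt_of_le hlam hlamLg
  have hc : 0 < τt * τ * lam / 4 := by positivity
  have hil0 : 0 < il := by nlinarith [hil, hlam]
  have htl : τ * lam ≤ 2 / 3 := by
    nlinarith [mul_le_mul_of_nonneg_left hlamLg hτ.le]
  have hc1 : τt * τ * lam / 4 ≤ 1 := by
    nlinarith [htl, hτt2, hτt.le, mul_pos hτ hlam]
  have hic0 : 0 < ic := by nlinarith [hic, hc]
  have hic1 : 1 ≤ ic := by nlinarith [hic, hc, hc1]
  have n1 : (1 + τt * τ * lam / 4) * T2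
      ≤ (1 + τt * τ * lam / 4) * ((1 - (τt * τ) * lam / 2) * A
        + (4 * (τt * τ) * il) * Ee - ((τt * τ) * τ) * (1 - 3 / 2 * (Lg * τ)) * B) :=
    mul_le_mul_of_nonneg_left hstep2 (by positivity)
  have k1 : (1 + τt * τ * lam / 4) * ((1 - (τt * τ) * lam / 2) * A)
      ≤ (1 - τt * τ * lam / 4) * A := by
    have h := mul_nonneg (mul_nonneg hc.le hc.le) hA
    nlinarith [h]
  have k2 : (1 + τt * τ * lam / 4) * ((4 * (τt * τ) * il) * Ee)
      ≤ (8 * τt * τ * il) * Ee := by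
    have h := mul_nonneg (by linarith : (0:ℝ) ≤ 1 - τt * τ * lam / 4)
      (show (0:ℝ) ≤ 4 * (τt * τ) * il * Ee by positivity)
    nlinarith [h]
  have k4 : (1 + ic) * D2 ≤ (2 * ic * (Ly ^ 2 * (γ ^ 2 * ηt ^ 2))) * Z := by
    have step : (1 + ic) * D2 ≤ (2 * ic) * (Ly ^ 2 * (γ ^ 2 * (ηt ^ 2 * Z))) :=
      mul_le_mul (by linarith) hD hD2 (by positivity)
    nlinarith [step]
  linarith [hsplit, n1, k1, k2, k4]

open RealInnerProductSpace in
/-- Lemma 3 of the paper: tracking error of the lower-level iterate under the update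
`y_{t+1} = y_t - τ_t τ w`, `x_{t+1} = x_t - γ η_t z`. -/
theorem stmt13 {E E' : Type*} [NormedAddCommGroup E] [InnerProductSpace ℝ E]
    [NormedAddCommGroup E'] [InnerProductSpace ℝ E']
    (g : E → E' → ℝ) (gy : E → E' → E') (ystar : E → E')
    (lam Lg Ly τ τt γ ηt : ℝ)
    (hlam : 0 < lam) (hlamLg : lam ≤ Lg)
    (hstrong : ∀ x y y', g x y + (inner ℝ (gy x y) (y' - y) : ℝ)
      + lam / 2 * ‖y' - y‖ ^ 2 ≤ g x y')
    (hsmooth : ∀ x y y', g x y' ≤ g x y + (inner ℝ (gy x y) (y' - y) : ℝ)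
      + Lg / 2 * ‖y' - y‖ ^ 2)
    (hmin : ∀ x y, g x (ystar x) ≤ g x y)
    (hylip : ∀ x x', ‖ystar x - ystar x'‖ ≤ Ly * ‖x - x'‖)
    (hτ : 0 < τ) (hτLg : τ ≤ 2 / (3 * Lg)) (hτt : 0 < τt) (hτt2 : τt ≤ 1 / 2)
    (xt : E) (yt : E') (w : E') (z : E)
    (yt1 : E') (hyt1 : yt1 = yt - (τt * τ) • w)
    (xt1 : E) (hxt1 : xt1 = xt - (γ * ηt) • z) :
    ‖yt1 - ystar xt1‖ ^ 2
      ≤ (1 - τt * τ * lam / 4) * ‖yt - ystar xt‖ ^ 2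
        + (8 * τt * τ / lam) * ‖gy xt yt - w‖ ^ 2
        + (8 * Ly ^ 2 * γ ^ 2 * ηt ^ 2 / (τt * τ * lam)) * ‖z‖ ^ 2
        - (1 + τt * τ * lam / 4) * (2 * τ / τt) * (1 / (2 * τ) - 3 * Lg / 4)
          * ‖yt - yt1‖ ^ 2 := by
  have hLg : 0 < Lg := lt_of_lt_of_le hlam hlamLg
  have hs : 0 < τt * τ := mul_pos hτt hτ
  have hc : 0 < τt * τ * lam / 4 := by positivity
  -- gradient inequality: strong convexity + optimality + smoothness
  have hgrad : lam / 2 * ‖yt - ystar xt‖ ^ 2 + τ * ⟪gy xt yt, w⟫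
      - Lg / 2 * τ ^ 2 * ‖w‖ ^ 2 ≤ ⟪gy xt yt, yt - ystar xt⟫ := by
    have hA := hstrong xt yt (ystar xt)
    have hB := hmin xt (yt - τ • w)
    have hC := hsmooth xt yt (yt - τ • w)
    have e1 : (⟪gy xt yt, ystar xt - yt⟫ : ℝ) = -⟪gy xt yt, yt - ystar xt⟫ := by
      rw [← inner_neg_right]
      congr 1
      abel
    have e2 : ‖ystar xt - yt‖ = ‖yt - ystar xt‖ := norm_sub_rev _ _
    have e3 : (⟪gy xt yt, yt - τ • w - yt⟫ : ℝ) = -(τ * ⟪gy xt yt, w⟫) := by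
      have h : yt - τ • w - yt = -(τ • w) := by abel
      rw [h, inner_neg_right, real_inner_smul_right]
    have e4 : ‖yt - τ • w - yt‖ ^ 2 = τ ^ 2 * ‖w‖ ^ 2 := by
      have h : yt - τ • w - yt = -(τ • w) := by abel
      rw [h, norm_neg, norm_smul, Real.norm_eq_abs, mul_pow, sq_abs]
    rw [e1, e2] at hA
    rw [e3, e4] at hC
    linarith
  have hrb : ‖w‖ ^ 2 - ‖gy xt yt - w‖ * ‖w‖ ≤ ⟪gy xt yt, w⟫ := by
    have h1 : |(⟪gy xt yt - w, w⟫ : ℝ)| ≤ ‖gy xt yt - w‖ * ‖w‖ :=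
      abs_real_inner_le_norm _ _
    have h2 : (⟪gy xt yt - w, w⟫ : ℝ) = ⟪gy xt yt, w⟫ - ‖w‖ ^ 2 := by
      rw [inner_sub_left, real_inner_self_eq_norm_sq]
    rw [h2] at h1
    have := abs_le.mp h1
    linarith [this.1]
  have hqq : ⟪gy xt yt, yt - ystar xt⟫ - ‖gy xt yt - w‖ * ‖yt - ystar xt‖
      ≤ ⟪yt - ystar xt, w⟫ := by
    have h1 : |(⟪yt - ystar xt, gy xt yt - w⟫ : ℝ)|
        ≤ ‖yt - ystar xt‖ * ‖gy xt yt - w‖ := abs_real_inner_le_norm _ _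
    have h2 : (⟪yt - ystar xt, gy xt yt - w⟫ : ℝ)
        = ⟪gy xt yt, yt - ystar xt⟫ - ⟪yt - ystar xt, w⟫ := by
      rw [inner_sub_right, real_inner_comm]
    rw [h2] at h1
    have := abs_le.mp h1
    linarith [this.2]
  have hT : ‖yt1 - ystar xt‖ ^ 2
      = ‖yt - ystar xt‖ ^ 2 - 2 * ((τt * τ) * ⟪yt - ystar xt, w⟫)
        + (τt * τ) ^ 2 * ‖w‖ ^ 2 := by
    have h : yt1 - ystar xt = (yt - ystar xt) - (τt * τ) • w := by
      rw [hyt1]; abel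
    rw [h, norm_sub_sq_real, real_inner_smul_right, norm_smul, Real.norm_eq_abs,
      mul_pow, sq_abs]
  have hstep2 := step2_scalar lam Lg τ (τt * τ) ‖yt - ystar xt‖ ‖w‖ ‖gy xt yt - w‖
    (⟪gy xt yt, yt - ystar xt⟫) (⟪yt - ystar xt, w⟫) (⟪gy xt yt, w⟫)
    (‖yt1 - ystar xt‖ ^ 2) lam⁻¹ hlam hlamLg hτ hs
    (by nlinarith [hτ, hτt2] : τt * τ ≤ τ)
    (mul_inv_cancel₀ hlam.ne') hT hgrad hrb hqq
  -- split
  have hsplit0 := young_norm (τt * τ * lam / 4) hc (yt1 - ystar xt) (ystar xt - ystar xt1)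
  rw [sub_add_sub_cancel] at hsplit0
  have hsplit : ‖yt1 - ystar xt1‖ ^ 2
      ≤ (1 + τt * τ * lam / 4) * ‖yt1 - ystar xt‖ ^ 2
        + (1 + (τt * τ * lam / 4)⁻¹) * ‖ystar xt - ystar xt1‖ ^ 2 := by
    rw [← one_div]
    exact hsplit0
  -- drift of ystar
  have hD : ‖ystar xt - ystar xt1‖ ^ 2 ≤ Ly ^ 2 * (γ ^ 2 * (ηt ^ 2 * ‖z‖ ^ 2)) := by
    have h := hylip xt xt1
    have hx : ‖xt - xt1‖ = |γ * ηt| * ‖z‖ := by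
      rw [hxt1, sub_sub_cancel, norm_smul, Real.norm_eq_abs]
    rw [hx] at h
    have h2 := pow_le_pow_left₀ (norm_nonneg _) h 2
    calc ‖ystar xt - ystar xt1‖ ^ 2 ≤ (Ly * (|γ * ηt| * ‖z‖)) ^ 2 := h2
      _ = Ly ^ 2 * (γ ^ 2 * (ηt ^ 2 * ‖z‖ ^ 2)) := by
        rw [mul_pow, mul_pow, sq_abs]; ring
  have hτ3 : τ * (3 * Lg) ≤ 2 := by
    rw [le_div_iff₀ (by positivity)] at hτLg
    exact hτLg
  have hfin := final_scalar lam Lg Ly τ τt γ ηt (‖yt - ystar xt‖ ^ 2) (‖w‖ ^ 2)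
    (‖gy xt yt - w‖ ^ 2) (‖z‖ ^ 2) (‖yt1 - ystar xt‖ ^ 2)
    (‖ystar xt - ystar xt1‖ ^ 2) (‖yt1 - ystar xt1‖ ^ 2) lam⁻¹ (τt * τ * lam / 4)⁻¹
    hlam hlamLg hτ hτ3 hτt hτt2 (sq_nonneg _) (sq_nonneg _) (sq_nonneg _)
    (sq_nonneg _) (sq_nonneg _) (mul_inv_cancel₀ hlam.ne') (mul_inv_cancel₀ hc.ne')
    hsplit hstep2 hD
  have hyy : ‖yt - yt1‖ ^ 2 = (τt * τ) ^ 2 * ‖w‖ ^ 2 := by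
    rw [hyt1, sub_sub_cancel, norm_smul, Real.norm_eq_abs, mul_pow, sq_abs]
  calc ‖yt1 - ystar xt1‖ ^ 2
      ≤ (1 - τt * τ * lam / 4) * ‖yt - ystar xt‖ ^ 2
        + (8 * τt * τ * lam⁻¹) * ‖gy xt yt - w‖ ^ 2
        + (2 * (τt * τ * lam / 4)⁻¹ * (Ly ^ 2 * (γ ^ 2 * ηt ^ 2))) * ‖z‖ ^ 2
        - (1 + τt * τ * lam / 4) * (((τt * τ) * τ) * (1 - 3 / 2 * (Lg * τ)) * ‖w‖ ^ 2) :=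
        hfin
    _ = (1 - τt * τ * lam / 4) * ‖yt - ystar xt‖ ^ 2
        + (8 * τt * τ / lam) * ‖gy xt yt - w‖ ^ 2
        + (8 * Ly ^ 2 * γ ^ 2 * ηt ^ 2 / (τt * τ * lam)) * ‖z‖ ^ 2
        - (1 + τt * τ * lam / 4) * (2 * τ / τt) * (1 / (2 * τ) - 3 * Lg / 4)
          * ‖yt - yt1‖ ^ 2 := by
        rw [hyy]
        field_simp
        ring
end

section
/- In the setting of the randomized-coordinate STORM update u_{t+1} = Π_Ω[(1-β_t)(u_t - h̃(e_{t-1};ξ_t,i_t)) + h̃(e_t;ξ_t,i_t)] with β_t ∈ [0,1], where each h_i is L_i-Lipschitz with E‖h_i(e;ξ)‖² ≤ C_i², and defining C(p)=Σᵢ C_i²/p_i, L(p)=Σᵢ L_i²/p_i, δ_t = ‖u_{t+1} - h(e_t)‖² with h(e)=(h_1(e),…,h_m(e)) ∈ Ω: E_{ξ_t,i_t}[δ_t] ≤ (1-β_t)δ_{t-1} + 2β_t² C(p) + 2L(p)‖e_t - e_{t-1}‖². -/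
open MeasureTheory RealInnerProductSpace

noncomputable def sing {F : Type*} [NormedAddCommGroup F] [InnerProductSpace ℝ F]
    {m : ℕ} (i : Fin m) : F →L[ℝ] PiLp 2 (fun _ : Fin m => F) :=
  ((PiLp.continuousLinearEquiv 2 ℝ (fun _ : Fin m => F)).symm.toContinuousLinearMap).comp
    { toLinearMap := LinearMap.single ℝ (fun _ : Fin m => F) i,
      cont := @continuous_single (Fin m) (fun _ => F) _ _ (fun _ => inferInstance) i }

lemma sing_apply {F : Type*} [NormedAddCommGroup F] [InnerProductSpace ℝ F]
    {m : ℕ} (i j : Fin m) (x : F) : sing i x j = if j = i then x else 0 := by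
  have h0 : sing i x j = Pi.single (M := fun _ : Fin m => F) i x j := rfl
  rw [h0, Pi.single_apply]

lemma sing_norm_sq {F : Type*} [NormedAddCommGroup F] [InnerProductSpace ℝ F]
    {m : ℕ} (i : Fin m) (x : F) : ‖sing i x‖ ^ 2 = ‖x‖ ^ 2 := by
  rw [PiLp.norm_sq_eq_of_L2]
  simp [sing_apply, apply_ite (fun y : F => ‖y‖ ^ 2)]

lemma proj_sq_le_s19 {V : Type*} [NormedAddCommGroup V] [InnerProductSpace ℝ V]
    {S : Set V} (hconv : Convex ℝ S) {a q b : V} (hq : q ∈ S) (hb : b ∈ S)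
    (hmin : ∀ c ∈ S, ‖a - q‖ ≤ ‖a - c‖) : ‖q - b‖ ^ 2 ≤ ‖a - b‖ ^ 2 := by
  haveI : Nonempty S := ⟨⟨q, hq⟩⟩
  have hinf : ‖a - q‖ = ⨅ w : S, ‖a - (w : V)‖ := by
    refine le_antisymm (le_ciInf fun w => hmin w w.2) ?_
    have hbdd : BddBelow (Set.range fun w : S => ‖a - (w : V)‖) := by
      refine ⟨0, ?_⟩; rintro x ⟨w, rfl⟩; exact norm_nonneg _
    exact ciInf_le hbdd ⟨q, hq⟩
  have hiner : ⟪a - q, b - q⟫ ≤ 0 :=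
    (norm_eq_iInf_iff_real_inner_le_zero hconv hq).mp hinf b hb
  have key : ‖a - b‖ ^ 2 = ‖a - q‖ ^ 2 - 2 * ⟪a - q, b - q⟫ + ‖b - q‖ ^ 2 := by
    have h1 : a - b = (a - q) - (b - q) := by abel
    rw [h1, norm_sub_sq_real]
  have h2 : ‖q - b‖ ^ 2 = ‖b - q‖ ^ 2 := by rw [norm_sub_rev]
  nlinarith [key, hiner, sq_nonneg ‖a - q‖, h2]

lemma variance_le {V : Type*} [NormedAddCommGroup V] [InnerProductSpace ℝ V] [CompleteSpace V]
    {W : Type*} [MeasurableSpace W] (μ : Measure W) [IsProbabilityMeasure μ]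
    {m : ℕ} (p : Fin m → ℝ) (hpsum : ∑ i, p i = 1)
    (X : Fin m → W → V) (hX : ∀ i, MemLp (X i) 2 μ) (c : V)
    (hc : ∑ i, p i • ∫ ω, X i ω ∂μ = c) :
    ∑ i, p i * ∫ ω, ‖X i ω - c‖ ^ 2 ∂μ ≤ ∑ i, p i * ∫ ω, ‖X i ω‖ ^ 2 ∂μ := by
  have hint : ∀ i, Integrable (X i) μ := fun i => (hX i).integrable one_le_two
  have hsq : ∀ i, Integrable (fun ω => ‖X i ω‖ ^ 2) μ := fun i => (hX i).norm.integrable_sq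
  have hstep : ∀ i, ∫ ω, ‖X i ω - c‖ ^ 2 ∂μ
      = ∫ ω, ‖X i ω‖ ^ 2 ∂μ - 2 * ⟪c, ∫ ω, X i ω ∂μ⟫ + ‖c‖ ^ 2 := by
    intro i
    have hpt : ∀ ω, ‖X i ω - c‖ ^ 2 = ‖X i ω‖ ^ 2 - 2 * ⟪c, X i ω⟫ + ‖c‖ ^ 2 := by
      intro ω; rw [norm_sub_sq_real, real_inner_comm]
    have I2 : Integrable (fun ω => 2 * ⟪c, X i ω⟫) μ := ((hint i).const_inner c).const_mul 2
    have I1 : Integrable (fun ω => ‖X i ω‖ ^ 2 - 2 * ⟪c, X i ω⟫) μ := (hsq i).sub I2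
    simp only [hpt]
    rw [integral_add I1 (integrable_const _), integral_sub (hsq i) I2,
      integral_const_mul, integral_inner (hint i), integral_const, probReal_univ]
    simp
  calc ∑ i, p i * ∫ ω, ‖X i ω - c‖ ^ 2 ∂μ
      = ∑ i, (p i * ∫ ω, ‖X i ω‖ ^ 2 ∂μ - 2 * ⟪c, p i • ∫ ω, X i ω ∂μ⟫ + p i * ‖c‖ ^ 2) := by
        refine Finset.sum_congr rfl fun i _ => ?_
        rw [hstep i, real_inner_smul_right]; ring
    _ = ∑ i, p i * ∫ ω, ‖X i ω‖ ^ 2 ∂μ - 2 * ⟪c, c⟫ + ‖c‖ ^ 2 := by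
        rw [Finset.sum_add_distrib, Finset.sum_sub_distrib, ← Finset.sum_mul, hpsum,
          ← Finset.mul_sum, ← inner_sum, hc]; ring
    _ ≤ ∑ i, p i * ∫ ω, ‖X i ω‖ ^ 2 ∂μ := by
        rw [real_inner_self_eq_norm_sq]; nlinarith [sq_nonneg ‖c‖]

lemma int_norm_add_sq {V : Type*} [NormedAddCommGroup V] [InnerProductSpace ℝ V] [CompleteSpace V]
    {W : Type*} [MeasurableSpace W] {μ : Measure W} [IsProbabilityMeasure μ]
    (a : V) {f : W → V} (hf : MemLp f 2 μ) :
    ∫ ω, ‖a + f ω‖ ^ 2 ∂μ = ‖a‖ ^ 2 + 2 * ⟪a, ∫ ω, f ω ∂μ⟫ + ∫ ω, ‖f ω‖ ^ 2 ∂μ := by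
  have hint : Integrable f μ := hf.integrable one_le_two
  have hsq : Integrable (fun ω => ‖f ω‖ ^ 2) μ := hf.norm.integrable_sq
  have I2 : Integrable (fun ω => 2 * ⟪a, f ω⟫) μ := (hint.const_inner a).const_mul 2
  have hpt : ∀ ω, ‖a + f ω‖ ^ 2 = ‖a‖ ^ 2 + 2 * ⟪a, f ω⟫ + ‖f ω‖ ^ 2 := fun ω =>
    norm_add_sq_real a (f ω)
  simp only [hpt]
  have I1 : Integrable (fun ω => ‖a‖ ^ 2 + 2 * ⟪a, f ω⟫) μ := (integrable_const _).add I2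
  rw [integral_add I1 hsq, integral_add (integrable_const _) I2,
    integral_const_mul, integral_inner hint, integral_const, probReal_univ]
  simp

set_option maxHeartbeats 1000000

/-- Second claim of Lemma 9: one step of the projected randomized-coordinate STORM update
satisfies `E_{ξ,i}[δ_t] ≤ (1-β)δ_{t-1} + 2β²C(p) + 2L(p)‖e_t - e_{t-1}‖²`, where
`C(p) = Σᵢ Cᵢ²/pᵢ`, `L(p) = Σᵢ Lᵢ²/pᵢ`, expectation over the index being the `p`-weighted
sum. -/
theorem stmt19 {E F W : Type*} [NormedAddCommGroup E]
    [NormedAddCommGroup F] [InnerProductSpace ℝ F] [CompleteSpace F]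
    [MeasurableSpace W] (μ : Measure W) [IsProbabilityMeasure μ]
    (m : ℕ) (p : Fin m → ℝ) (hp : ∀ i, 0 < p i) (hpsum : ∑ i, p i = 1)
    (h : Fin m → E → F) (H : Fin m → E → W → F) (C L : Fin m → ℝ) (β : ℝ)
    (hβ0 : 0 ≤ β) (hβ1 : β ≤ 1)
    (hmem : ∀ i e, MemLp (H i e) 2 μ)
    (hunb : ∀ i e, ∫ ω, H i e ω ∂μ = h i e)
    (hC : ∀ i e, ∫ ω, ‖H i e ω‖ ^ 2 ∂μ ≤ C i ^ 2)
    (hlip : ∀ i ω e e', ‖H i e ω - H i e' ω‖ ≤ L i * ‖e - e'‖)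
    (hstack : E → PiLp 2 (fun _ : Fin m => F))
    (hhstack : ∀ e j, hstack e j = h j e)
    (S : Set (PiLp 2 (fun _ : Fin m => F))) (hSconv : Convex ℝ S) (hSclosed : IsClosed S)
    (hhS : ∀ e, hstack e ∈ S)
    (P : PiLp 2 (fun _ : Fin m => F) → PiLp 2 (fun _ : Fin m => F))
    (hP : ∀ a, P a ∈ S ∧ ∀ b ∈ S, ‖a - P a‖ ≤ ‖a - b‖)
    (tilde : Fin m → E → W → PiLp 2 (fun _ : Fin m => F))
    (htilde : ∀ i e ω j, tilde i e ω j = if j = i then (p i)⁻¹ • H i e ω else 0)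
    (u : PiLp 2 (fun _ : Fin m => F)) (e₀ e₁ : E) :
    ∑ i, p i * ∫ ω, ‖P ((1 - β) • (u - tilde i e₀ ω) + tilde i e₁ ω) - hstack e₁‖ ^ 2 ∂μ
      ≤ (1 - β) * ‖u - hstack e₀‖ ^ 2
        + 2 * β ^ 2 * (∑ i, C i ^ 2 / p i)
        + 2 * (∑ i, L i ^ 2 / p i) * ‖e₁ - e₀‖ ^ 2 := by
  classical
  haveI : CompleteSpace (PiLp 2 (fun _ : Fin m => F)) :=
    inferInstance
  -- basic facts about `tilde`
  have htf : ∀ i e, tilde i e = fun ω => sing i ((p i)⁻¹ • H i e ω) := by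
    intro i e; funext ω; ext j
    rw [htilde, sing_apply]
  have htmem : ∀ i e, MemLp (tilde i e) 2 μ := by
    intro i e; rw [htf]
    exact (sing i).comp_memLp' ((hmem i e).const_smul ((p i)⁻¹))
  have htint : ∀ i e, Integrable (tilde i e) μ := fun i e => (htmem i e).integrable one_le_two
  have hgint : ∀ i e, ∫ ω, tilde i e ω ∂μ = sing i ((p i)⁻¹ • h i e) := by
    intro i e; rw [htf]
    have hIH : Integrable (fun ω => (p i)⁻¹ • H i e ω) μ :=
      ((hmem i e).integrable one_le_two).smul ((p i)⁻¹)
    rw [ContinuousLinearMap.integral_comp_comm _ hIH, integral_smul, hunb]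
  have hsum_tilde : ∀ e, ∑ i, p i • ∫ ω, tilde i e ω ∂μ = hstack e := by
    intro e
    have h1 : ∀ i : Fin m, p i • ∫ ω, tilde i e ω ∂μ = sing i (h i e) := by
      intro i
      rw [hgint, ← _root_.map_smul, smul_smul, mul_inv_cancel₀ (hp i).ne', one_smul]
    rw [Finset.sum_congr rfl fun i _ => h1 i]
    ext j
    rw [WithLp.ofLp_sum]
    simp [sing_apply, hhstack]
  -- moment bounds for `tilde`
  have hmom : ∀ i e, ∫ ω, ‖tilde i e ω‖ ^ 2 ∂μ ≤ (p i)⁻¹ ^ 2 * C i ^ 2 := by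
    intro i e
    have hpt : ∀ ω, ‖tilde i e ω‖ ^ 2 = (p i)⁻¹ ^ 2 * ‖H i e ω‖ ^ 2 := by
      intro ω; simp only [htf]
      rw [sing_norm_sq, norm_smul, Real.norm_of_nonneg (inv_pos.2 (hp i)).le, mul_pow]
    simp only [hpt]
    rw [integral_const_mul]
    exact mul_le_mul_of_nonneg_left (hC i e) (sq_nonneg _)
  have hdiff : ∀ i, ∫ ω, ‖tilde i e₁ ω - tilde i e₀ ω‖ ^ 2 ∂μ
      ≤ (p i)⁻¹ ^ 2 * (L i ^ 2 * ‖e₁ - e₀‖ ^ 2) := by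
    intro i
    calc ∫ ω, ‖tilde i e₁ ω - tilde i e₀ ω‖ ^ 2 ∂μ
        ≤ ∫ _ω, ((p i)⁻¹ ^ 2 * (L i ^ 2 * ‖e₁ - e₀‖ ^ 2)) ∂μ := by
          refine integral_mono_of_nonneg (.of_forall fun ω => sq_nonneg _)
            (integrable_const _) (.of_forall fun ω => ?_)
          dsimp only
          have hsub : tilde i e₁ ω - tilde i e₀ ω
              = sing i ((p i)⁻¹ • (H i e₁ ω - H i e₀ ω)) := by
            simp only [htf]; rw [← map_sub, ← smul_sub]
          rw [hsub, sing_norm_sq, norm_smul, Real.norm_of_nonneg (inv_pos.2 (hp i)).le, mul_pow]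
          have h1 := hlip i ω e₁ e₀
          have h4 : (0:ℝ) ≤ ‖H i e₁ ω - H i e₀ ω‖ := norm_nonneg _
          have h5 : ‖H i e₁ ω - H i e₀ ω‖ ^ 2 ≤ L i ^ 2 * ‖e₁ - e₀‖ ^ 2 := by
            nlinarith [h1, h4]
          exact mul_le_mul_of_nonneg_left h5 (sq_nonneg ((p i)⁻¹))
      _ = (p i)⁻¹ ^ 2 * (L i ^ 2 * ‖e₁ - e₀‖ ^ 2) := by simp
  -- decomposition
  set b₀ := hstack e₀ with hb₀
  set b₁ := hstack e₁ with hb₁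
  set a := (1 - β) • (u - b₀) with ha
  set Z : Fin m → W → PiLp 2 (fun _ : Fin m => F) :=
    fun i ω => (1 - β) • (b₀ - tilde i e₀ ω) + (tilde i e₁ ω - b₁) with hZdef
  have hZmem : ∀ i, MemLp (Z i) 2 μ := fun i => by
    have := (((memLp_const b₀).sub (htmem i e₀)).const_smul (1 - β)).add ((htmem i e₁).sub (memLp_const b₁))
    exact this
  -- Step A : projection is non-expansive
  have stepA : ∀ i, ∫ ω, ‖P ((1 - β) • (u - tilde i e₀ ω) + tilde i e₁ ω) - b₁‖ ^ 2 ∂μ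
      ≤ ∫ ω, ‖a + Z i ω‖ ^ 2 ∂μ := by
    intro i
    have hZm : MemLp (fun ω => a + Z i ω) 2 μ := (memLp_const a).add (hZmem i)
    refine integral_mono_of_nonneg (.of_forall fun ω => sq_nonneg _)
      hZm.norm.integrable_sq (.of_forall fun ω => ?_)
    set q := (1 - β) • (u - tilde i e₀ ω) + tilde i e₁ ω with hq
    have harg : q - b₁ = a + Z i ω := by
      simp only [hq, ha, hZdef]; module
    calc ‖P q - b₁‖ ^ 2 ≤ ‖q - b₁‖ ^ 2 :=
          proj_sq_le_s19 hSconv (hP q).1 (hhS e₁) (hP q).2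
      _ = ‖a + Z i ω‖ ^ 2 := by rw [harg]
  -- mean of Z
  have hZint : ∀ i, ∫ ω, Z i ω ∂μ
      = (1 - β) • (b₀ - ∫ ω, tilde i e₀ ω ∂μ) + ((∫ ω, tilde i e₁ ω ∂μ) - b₁) := by
    intro i
    have i1 : Integrable (fun ω => (1 - β) • (b₀ - tilde i e₀ ω)) μ :=
      by have := ((integrable_const b₀).sub (htint i e₀)).smul (1 - β); exact this
    have i2 : Integrable (fun ω => tilde i e₁ ω - b₁) μ := (htint i e₁).sub (integrable_const _)
    rw [show Z i = fun ω => (1 - β) • (b₀ - tilde i e₀ ω) + (tilde i e₁ ω - b₁) from rfl,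
      integral_add i1 i2, integral_smul, integral_sub (integrable_const _) (htint i e₀),
      integral_sub (htint i e₁) (integrable_const _), integral_const, probReal_univ]
    simp
  have hZzero : ∑ i, p i • ∫ ω, Z i ω ∂μ = 0 := by
    have h1 : ∀ i : Fin m, p i • ∫ ω, Z i ω ∂μ
        = ((1 - β) • (p i • b₀) - (1 - β) • (p i • ∫ ω, tilde i e₀ ω ∂μ))
          + (p i • ∫ ω, tilde i e₁ ω ∂μ - p i • b₁) := by
      intro i; rw [hZint i]; module
    rw [Finset.sum_congr rfl fun i _ => h1 i, Finset.sum_add_distrib,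
      Finset.sum_sub_distrib, Finset.sum_sub_distrib,
      ← Finset.smul_sum, ← Finset.smul_sum, ← Finset.sum_smul, hpsum, one_smul,
      hsum_tilde, hsum_tilde, ← Finset.sum_smul, hpsum, one_smul]
    simp [hb₀, hb₁]
  -- split Z into the Lipschitz part and the β part
  set A : Fin m → W → PiLp 2 (fun _ : Fin m => F) :=
    fun i ω => (tilde i e₁ ω - tilde i e₀ ω) - (b₁ - b₀) with hAdef
  set B : Fin m → W → PiLp 2 (fun _ : Fin m => F) :=
    fun i ω => β • (tilde i e₀ ω - b₀) with hBdef
  have hAmem : ∀ i, MemLp (A i) 2 μ := fun i =>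
    (((htmem i e₁).sub (htmem i e₀)).sub (memLp_const _))
  have hBmem : ∀ i, MemLp (B i) 2 μ := fun i =>
    by have := ((htmem i e₀).sub (memLp_const b₀)).const_smul β; exact this
  have hZsplit : ∀ i ω, Z i ω = A i ω + B i ω := by
    intro i ω; simp only [hZdef, hAdef, hBdef]; module
  have stepC : ∀ i, ∫ ω, ‖Z i ω‖ ^ 2 ∂μ
      ≤ 2 * ∫ ω, ‖A i ω‖ ^ 2 ∂μ + 2 * ∫ ω, ‖B i ω‖ ^ 2 ∂μ := by
    intro i
    have hIA : Integrable (fun ω => ‖A i ω‖ ^ 2) μ := (hAmem i).norm.integrable_sq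
    have hIB : Integrable (fun ω => ‖B i ω‖ ^ 2) μ := (hBmem i).norm.integrable_sq
    have hIA2 : Integrable (fun ω => 2 * ‖A i ω‖ ^ 2) μ := hIA.const_mul 2
    have hIB2 : Integrable (fun ω => 2 * ‖B i ω‖ ^ 2) μ := hIB.const_mul 2
    have key : ∫ ω, ‖Z i ω‖ ^ 2 ∂μ ≤ ∫ ω, (2 * ‖A i ω‖ ^ 2 + 2 * ‖B i ω‖ ^ 2) ∂μ := by
      refine integral_mono_of_nonneg (.of_forall fun ω => sq_nonneg _)
        (hIA2.add hIB2) (.of_forall fun ω => ?_)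
      dsimp only
      rw [hZsplit]
      nlinarith [norm_add_le (A i ω) (B i ω), norm_nonneg (A i ω), norm_nonneg (B i ω),
        sq_nonneg (‖A i ω‖ - ‖B i ω‖), norm_nonneg (A i ω + B i ω),
        sq_nonneg (‖A i ω‖ + ‖B i ω‖)]
    rwa [integral_add hIA2 hIB2, integral_const_mul, integral_const_mul] at key
  -- variance bounds
  have hAvar : ∑ i, p i * ∫ ω, ‖A i ω‖ ^ 2 ∂μ
      ≤ ∑ i, p i * ∫ ω, ‖tilde i e₁ ω - tilde i e₀ ω‖ ^ 2 ∂μ := by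
    have hXmem : ∀ i, MemLp (fun ω => tilde i e₁ ω - tilde i e₀ ω) 2 μ := fun i =>
      (htmem i e₁).sub (htmem i e₀)
    have hc : ∑ i, p i • ∫ ω, (tilde i e₁ ω - tilde i e₀ ω) ∂μ = b₁ - b₀ := by
      have h2 : ∀ i : Fin m, p i • ∫ ω, (tilde i e₁ ω - tilde i e₀ ω) ∂μ
          = p i • ∫ ω, tilde i e₁ ω ∂μ - p i • ∫ ω, tilde i e₀ ω ∂μ := by
        intro i; rw [integral_sub (htint i e₁) (htint i e₀), smul_sub]
      rw [Finset.sum_congr rfl fun i _ => h2 i, Finset.sum_sub_distrib,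
        hsum_tilde, hsum_tilde]
    exact variance_le μ p hpsum _ hXmem _ hc
  have hBvar : ∑ i, p i * ∫ ω, ‖tilde i e₀ ω - b₀‖ ^ 2 ∂μ
      ≤ ∑ i, p i * ∫ ω, ‖tilde i e₀ ω‖ ^ 2 ∂μ :=
    variance_le μ p hpsum _ (fun i => htmem i e₀) _ (hsum_tilde e₀)
  have hBsq : ∀ i, ∫ ω, ‖B i ω‖ ^ 2 ∂μ = β ^ 2 * ∫ ω, ‖tilde i e₀ ω - b₀‖ ^ 2 ∂μ := by
    intro i
    have hpt : ∀ ω, ‖B i ω‖ ^ 2 = β ^ 2 * ‖tilde i e₀ ω - b₀‖ ^ 2 := by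
      intro ω; simp only [hBdef]
      rw [norm_smul, Real.norm_of_nonneg hβ0, mul_pow]
    simp only [hpt]; rw [integral_const_mul]
  -- assemble the pieces
  have hsumA : ∑ i, p i * ∫ ω, ‖A i ω‖ ^ 2 ∂μ ≤ (∑ i, L i ^ 2 / p i) * ‖e₁ - e₀‖ ^ 2 := by
    refine le_trans hAvar (le_trans (Finset.sum_le_sum fun i _ =>
      mul_le_mul_of_nonneg_left (hdiff i) (hp i).le) (le_of_eq ?_))
    rw [Finset.sum_mul]
    refine Finset.sum_congr rfl fun i _ => ?_
    have hne := (hp i).ne'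
    field_simp
  have hsumB : ∑ i, p i * ∫ ω, ‖B i ω‖ ^ 2 ∂μ ≤ β ^ 2 * (∑ i, C i ^ 2 / p i) := by
    have e1 : ∑ i, p i * ∫ ω, ‖B i ω‖ ^ 2 ∂μ
        = β ^ 2 * ∑ i, p i * ∫ ω, ‖tilde i e₀ ω - b₀‖ ^ 2 ∂μ := by
      rw [Finset.mul_sum]
      refine Finset.sum_congr rfl fun i _ => ?_
      rw [hBsq i]; ring
    rw [e1]
    refine mul_le_mul_of_nonneg_left (le_trans hBvar ?_) (sq_nonneg β)
    refine le_trans (Finset.sum_le_sum fun i _ =>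
      mul_le_mul_of_nonneg_left (hmom i e₀) (hp i).le) (le_of_eq ?_)
    refine Finset.sum_congr rfl fun i _ => ?_
    have hne := (hp i).ne'
    field_simp
  have hnorma : ‖a‖ ^ 2 ≤ (1 - β) * ‖u - b₀‖ ^ 2 := by
    rw [ha, norm_smul, Real.norm_of_nonneg (by linarith), mul_pow]
    nlinarith [mul_nonneg (mul_nonneg (by linarith : (0:ℝ) ≤ 1 - β) hβ0) (sq_nonneg ‖u - b₀‖)]
  calc ∑ i, p i * ∫ ω, ‖P ((1 - β) • (u - tilde i e₀ ω) + tilde i e₁ ω) - b₁‖ ^ 2 ∂μ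
      ≤ ∑ i, p i * ∫ ω, ‖a + Z i ω‖ ^ 2 ∂μ :=
        Finset.sum_le_sum fun i _ => mul_le_mul_of_nonneg_left (stepA i) (hp i).le
    _ = ‖a‖ ^ 2 + 2 * ⟪a, ∑ i, p i • ∫ ω, Z i ω ∂μ⟫ + ∑ i, p i * ∫ ω, ‖Z i ω‖ ^ 2 ∂μ := by
        have h3 : ∀ i : Fin m, p i * ∫ ω, ‖a + Z i ω‖ ^ 2 ∂μ
            = p i * ‖a‖ ^ 2 + 2 * ⟪a, p i • ∫ ω, Z i ω ∂μ⟫ + p i * ∫ ω, ‖Z i ω‖ ^ 2 ∂μ := by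
          intro i
          rw [int_norm_add_sq a (hZmem i), real_inner_smul_right]; ring
        rw [Finset.sum_congr rfl fun i _ => h3 i, Finset.sum_add_distrib,
          Finset.sum_add_distrib, ← Finset.sum_mul, hpsum, ← Finset.mul_sum, ← inner_sum]
        ring
    _ = ‖a‖ ^ 2 + ∑ i, p i * ∫ ω, ‖Z i ω‖ ^ 2 ∂μ := by
        rw [hZzero, inner_zero_right]; ring
    _ ≤ ‖a‖ ^ 2 + (2 * ∑ i, p i * ∫ ω, ‖A i ω‖ ^ 2 ∂μ
          + 2 * ∑ i, p i * ∫ ω, ‖B i ω‖ ^ 2 ∂μ) := by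
        have h4 : ∑ i, p i * ∫ ω, ‖Z i ω‖ ^ 2 ∂μ
            ≤ ∑ i, p i * (2 * ∫ ω, ‖A i ω‖ ^ 2 ∂μ + 2 * ∫ ω, ‖B i ω‖ ^ 2 ∂μ) :=
          Finset.sum_le_sum fun i _ => mul_le_mul_of_nonneg_left (stepC i) (hp i).le
        have h5 : ∑ i, p i * (2 * ∫ ω, ‖A i ω‖ ^ 2 ∂μ + 2 * ∫ ω, ‖B i ω‖ ^ 2 ∂μ)
            = 2 * ∑ i, p i * ∫ ω, ‖A i ω‖ ^ 2 ∂μ + 2 * ∑ i, p i * ∫ ω, ‖B i ω‖ ^ 2 ∂μ := by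
          rw [Finset.mul_sum, Finset.mul_sum, ← Finset.sum_add_distrib]
          exact Finset.sum_congr rfl fun i _ => by ring
        linarith
    _ ≤ (1 - β) * ‖u - b₀‖ ^ 2 + 2 * β ^ 2 * (∑ i, C i ^ 2 / p i)
          + 2 * (∑ i, L i ^ 2 / p i) * ‖e₁ - e₀‖ ^ 2 := by
        linarith [hsumA, hsumB, hnorma]
end
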